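/- Let ρ be a finite positive Borel measure on the unit circle 𝕋, α ∈ ℝ, u(z) = iα + ∫_𝕋 (ζ+z)/(ζ−z) dρ(ζ) for z ∈ 𝔻, t > 1, Φ_t(z) = z·exp((t−1)u(z)), and Ω_t = {z ∈ 𝔻 : |Φ_t(z)| < 1}. Then u restricted to Ω_t is Lipschitz continuous: there exists L ≥ 0 such that |u(z₁) − u(z₂)| ≤ L·|z₁ − z₂| for all z₁, z₂ ∈ Ω_t. Consequently, u restricted to Ω_t extends to a continuous function on the closure of Ω_t. -/

import Mathlib

open MeasureTheory Filter

/-- u(z) = iα + ∫_𝕋 (ζ+z)/(ζ−z) dρ(ζ). -/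
noncomputable def uT (ρ : Measure ℂ) (α : ℝ) (z : ℂ) : ℂ :=
  Complex.I * (α : ℂ) + ∫ ζ : ℂ, (ζ + z) / (ζ - z) ∂ρ

/-- Φ_t(z) = z·exp((t−1)·u(z)). -/
noncomputable def PhiT (ρ : Measure ℂ) (α t : ℝ) (z : ℂ) : ℂ :=
  z * Complex.exp (((t : ℂ) - 1) * uT ρ α z)

/-- Ω_t = {z ∈ 𝔻 : |Φ_t(z)| < 1}. -/
def OmegaTset (ρ : Measure ℂ) (α t : ℝ) : Set ℂ :=
  {z : ℂ | ‖z‖ < 1 ∧ ‖PhiT ρ α t z‖ < 1}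


lemma myAeNormOne (ρ : Measure ℂ) (hρ : ρ {z : ℂ | ‖z‖ = 1}ᶜ = 0) :
    ∀ᵐ ζ ∂ρ, ‖ζ‖ = 1 := by
  have h : ∀ᵐ ζ ∂ρ, ‖ζ‖ = 1 := by
    rw [ae_iff]; simpa [Set.compl_setOf] using hρ
  filter_upwards [h] with ζ hζ
  simpa using hζ

lemma myIntF (ρ : Measure ℂ) [IsFiniteMeasure ρ] (hρae : ∀ᵐ ζ ∂ρ, ‖ζ‖ = 1)
    (z : ℂ) (hz : ‖z‖ < 1) : Integrable (fun ζ => (ζ + z) / (ζ - z)) ρ := by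
  refine ⟨(Measurable.div (by measurability) (by measurability)).aestronglyMeasurable, ?_⟩
  apply MeasureTheory.HasFiniteIntegral.of_bounded (C := 2 / (1 - ‖z‖))
  filter_upwards [hρae] with ζ hζ
  have h1 : (1 : ℝ) - ‖z‖ ≤ ‖ζ - z‖ := by
    have := norm_sub_norm_le ζ z; linarith [hζ ▸ this]
  have h2 : ‖ζ + z‖ ≤ 2 := by
    have := norm_add_le ζ z; rw [hζ] at this; linarith
  rw [norm_div]
  exact div_le_div₀ (by norm_num) h2 (by linarith) h1

lemma myIntG (ρ : Measure ℂ) [IsFiniteMeasure ρ] (hρae : ∀ᵐ ζ ∂ρ, ‖ζ‖ = 1)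
    (z : ℂ) (hz : ‖z‖ < 1) : Integrable (fun ζ => (‖ζ - z‖ ^ 2)⁻¹) ρ := by
  refine ⟨(((measurable_id.sub_const z).norm.pow_const 2).inv).aestronglyMeasurable, ?_⟩
  apply MeasureTheory.HasFiniteIntegral.of_bounded (C := ((1 - ‖z‖) ^ 2)⁻¹)
  filter_upwards [hρae] with ζ hζ
  have h1 : (1 : ℝ) - ‖z‖ ≤ ‖ζ - z‖ := by
    have := norm_sub_norm_le ζ z; linarith [hζ ▸ this]
  rw [Real.norm_eq_abs, abs_of_nonneg (by positivity)]
  apply inv_anti₀ (by nlinarith)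
  nlinarith

lemma myReF (z ζ : ℂ) (hζ : ‖ζ‖ = 1) (hz : ‖z‖ < 1) :
    ((ζ + z) / (ζ - z)).re = (1 - ‖z‖ ^ 2) / ‖ζ - z‖ ^ 2 := by
  have hne : ζ - z ≠ 0 := by
    intro h; rw [sub_eq_zero] at h; rw [h] at hζ; linarith [hζ ▸ hz]
  have hns : Complex.normSq (ζ - z) ≠ 0 := by simpa [Complex.normSq_eq_zero] using hne
  have h1 : ζ.re * ζ.re + ζ.im * ζ.im = 1 := by
    have : Complex.normSq ζ = 1 := by
      rw [← Complex.sq_norm, hζ]; norm_num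
    simpa [Complex.normSq_apply] using this
  have hz2 : ‖z‖ ^ 2 = z.re * z.re + z.im * z.im := by
    rw [Complex.sq_norm, Complex.normSq_apply]
  have hzz2 : ‖ζ - z‖ ^ 2 = Complex.normSq (ζ - z) := by
    rw [Complex.sq_norm]
  rw [Complex.div_re, hz2, hzz2]
  simp only [Complex.normSq_apply, Complex.add_re, Complex.add_im, Complex.sub_re, Complex.sub_im] at *
  rw [← add_div, div_left_inj' hns]
  linear_combination h1


lemma myDiffBound (z₁ z₂ ζ : ℂ) (hζ : ‖ζ‖ = 1) (h1 : ‖z₁‖ < 1) (h2 : ‖z₂‖ < 1) :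
    ‖(ζ + z₁) / (ζ - z₁) - (ζ + z₂) / (ζ - z₂)‖ ≤
      ‖z₁ - z₂‖ * ((‖ζ - z₁‖ ^ 2)⁻¹ + (‖ζ - z₂‖ ^ 2)⁻¹) := by
  have hne1 : ζ - z₁ ≠ 0 := by
    intro h; rw [sub_eq_zero] at h; rw [h] at hζ; linarith [hζ ▸ h1]
  have hne2 : ζ - z₂ ≠ 0 := by
    intro h; rw [sub_eq_zero] at h; rw [h] at hζ; linarith [hζ ▸ h2]
  have hid : (ζ + z₁) / (ζ - z₁) - (ζ + z₂) / (ζ - z₂)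
      = 2 * ζ * (z₁ - z₂) / ((ζ - z₁) * (ζ - z₂)) := by
    field_simp; ring
  rw [hid]
  set p := ‖ζ - z₁‖ with hp
  set q := ‖ζ - z₂‖ with hq
  have hp0 : 0 < p := norm_pos_iff.mpr hne1
  have hq0 : 0 < q := norm_pos_iff.mpr hne2
  have hkey : 2 * (p⁻¹ * q⁻¹) ≤ (p ^ 2)⁻¹ + (q ^ 2)⁻¹ := by
    simp only [← inv_pow]
    nlinarith [sq_nonneg (p⁻¹ - q⁻¹)]
  have hnorm : ‖2 * ζ * (z₁ - z₂) / ((ζ - z₁) * (ζ - z₂))‖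
      = ‖z₁ - z₂‖ * (2 * (p⁻¹ * q⁻¹)) := by
    have h2n : ‖(2:ℂ)‖ = 2 := by norm_num
    rw [norm_div, norm_mul, norm_mul, norm_mul, hζ, h2n, ← hp, ← hq]
    field_simp
  rw [hnorm]
  exact mul_le_mul_of_nonneg_left hkey (norm_nonneg _)

lemma myReU (ρ : Measure ℂ) [IsFiniteMeasure ρ] (hρae : ∀ᵐ ζ ∂ρ, ‖ζ‖ = 1)
    (α : ℝ) (z : ℂ) (hz : ‖z‖ < 1) :
    (uT ρ α z).re = (1 - ‖z‖ ^ 2) * ∫ ζ, (‖ζ - z‖ ^ 2)⁻¹ ∂ρ := by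
  unfold uT
  rw [Complex.add_re]
  have h0 : (Complex.I * (α : ℂ)).re = 0 := by simp
  have hre := integral_re (𝕜 := ℂ) (μ := ρ) (myIntF ρ hρae z hz)
  simp only [RCLike.re_to_complex] at hre
  rw [h0, zero_add, ← hre, ← MeasureTheory.integral_const_mul]
  apply integral_congr_ae
  filter_upwards [hρae] with ζ hζ
  rw [myReF z ζ hζ hz, div_eq_mul_inv]

lemma myGBound (ρ : Measure ℂ) [IsFiniteMeasure ρ] (hρae : ∀ᵐ ζ ∂ρ, ‖ζ‖ = 1)
    (α t : ℝ) (ht : 1 < t) (z : ℂ) (hz : z ∈ OmegaTset ρ α t) :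
    ∫ ζ, (‖ζ - z‖ ^ 2)⁻¹ ∂ρ ≤ 2 / (t - 1) + 4 * (ρ Set.univ).toReal := by
  obtain ⟨hz1, hz2⟩ := hz
  set G := ∫ ζ, (‖ζ - z‖ ^ 2)⁻¹ ∂ρ with hG
  have hG0 : 0 ≤ G := integral_nonneg (fun ζ => by positivity)
  have hmeas0 : (0:ℝ) ≤ (ρ Set.univ).toReal := ENNReal.toReal_nonneg
  have ht0 : (0:ℝ) < t - 1 := by linarith
  rcases le_or_gt (1/2 : ℝ) ‖z‖ with hbig | hsmall
  · -- use the Phi bound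
    have hzpos : (0:ℝ) < ‖z‖ := by linarith
    have hΦ : ‖PhiT ρ α t z‖ = ‖z‖ * Real.exp ((t - 1) * (uT ρ α z).re) := by
      unfold PhiT
      rw [norm_mul, Complex.norm_exp]
      congr 2
      have hc : ((t : ℂ) - 1) = ((t - 1 : ℝ) : ℂ) := by push_cast; ring
      rw [hc]
      simp
    rw [hΦ] at hz2
    have h1 : Real.exp ((t - 1) * (uT ρ α z).re) < ‖z‖⁻¹ := by
      rw [inv_eq_one_div, lt_div_iff₀ hzpos]
      linarith [hz2, mul_comm ‖z‖ (Real.exp ((t - 1) * (uT ρ α z).re))]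
    have h2 : (t - 1) * (uT ρ α z).re < Real.log (‖z‖⁻¹) :=
      (Real.lt_log_iff_exp_lt (by positivity)).mpr h1
    have h3 : Real.log (‖z‖⁻¹) ≤ ‖z‖⁻¹ - 1 := Real.log_le_sub_one_of_pos (by positivity)
    have hi2 : ‖z‖⁻¹ ≤ 2 := by
      rw [inv_le_comm₀ hzpos (by norm_num)]
      linarith
    have hsub : ‖z‖⁻¹ - 1 ≤ 2 * (1 - ‖z‖) := by
      have : ‖z‖⁻¹ - 1 = ‖z‖⁻¹ * (1 - ‖z‖) := by
        rw [mul_sub, mul_one, inv_mul_cancel₀ (ne_of_gt hzpos)]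
      rw [this]
      exact mul_le_mul_of_nonneg_right hi2 (by linarith)
    rw [myReU ρ hρae α z hz1] at h2
    have hmain : (t - 1) * ((1 - ‖z‖ ^ 2) * G) < 2 * (1 - ‖z‖) := lt_of_lt_of_le h2 (le_trans h3 hsub)
    have hGle : G * (t - 1) ≤ 2 := by
      nlinarith [mul_nonneg (mul_nonneg hG0 ht0.le) (norm_nonneg z), sq_nonneg (1 - ‖z‖)]
    have : G ≤ 2 / (t - 1) := by
      rw [le_div_iff₀ ht0]; exact hGle
    linarith [mul_nonneg (by norm_num : (0:ℝ) ≤ 4) hmeas0]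
  · -- small z: pointwise bound 4
    have hle : ∀ᵐ ζ ∂ρ, (‖ζ - z‖ ^ 2)⁻¹ ≤ (4 : ℝ) := by
      filter_upwards [hρae] with ζ hζ
      have h1 : (1:ℝ)/2 ≤ ‖ζ - z‖ := by
        have := norm_sub_norm_le ζ z; rw [hζ] at this; linarith
      rw [show (4:ℝ) = ((1/2:ℝ)^2)⁻¹ by norm_num]
      apply inv_anti₀ (by norm_num)
      nlinarith
    have := integral_mono_ae (myIntG ρ hρae z hz1) (integrable_const (4:ℝ)) hle
    rw [integral_const, smul_eq_mul, measureReal_def] at this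
    have h24 : (0:ℝ) ≤ 2 / (t-1) := by positivity
    linarith

lemma myLip (ρ : Measure ℂ) [IsFiniteMeasure ρ] (hρae : ∀ᵐ ζ ∂ρ, ‖ζ‖ = 1)
    (α t : ℝ) (ht : 1 < t) (z₁ : ℂ) (h₁ : z₁ ∈ OmegaTset ρ α t)
    (z₂ : ℂ) (h₂ : z₂ ∈ OmegaTset ρ α t) :
    ‖uT ρ α z₁ - uT ρ α z₂‖ ≤
      (2 * (2 / (t - 1) + 4 * (ρ Set.univ).toReal)) * ‖z₁ - z₂‖ := by
  have hz1 : ‖z₁‖ < 1 := by exact h₁.1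
  have hz2 : ‖z₂‖ < 1 := by exact h₂.1
  set M : ℝ := 2 / (t - 1) + 4 * (ρ Set.univ).toReal with hM
  have hdiff : uT ρ α z₁ - uT ρ α z₂
      = ∫ ζ, ((ζ + z₁) / (ζ - z₁) - (ζ + z₂) / (ζ - z₂)) ∂ρ := by
    unfold uT
    rw [add_sub_add_left_eq_sub,
      ← integral_sub (myIntF ρ hρae z₁ hz1) (myIntF ρ hρae z₂ hz2)]
  rw [hdiff]
  have hint : Integrable (fun ζ => ‖z₁ - z₂‖ * ((‖ζ - z₁‖ ^ 2)⁻¹ + (‖ζ - z₂‖ ^ 2)⁻¹)) ρ :=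
    ((myIntG ρ hρae z₁ hz1).add (myIntG ρ hρae z₂ hz2)).const_mul _
  have hb : ‖∫ ζ, ((ζ + z₁) / (ζ - z₁) - (ζ + z₂) / (ζ - z₂)) ∂ρ‖
      ≤ ∫ ζ, ‖z₁ - z₂‖ * ((‖ζ - z₁‖ ^ 2)⁻¹ + (‖ζ - z₂‖ ^ 2)⁻¹) ∂ρ := by
    apply norm_integral_le_of_norm_le hint
    filter_upwards [hρae] with ζ hζ
    exact myDiffBound z₁ z₂ ζ hζ hz1 hz2
  have heq : ∫ ζ, ‖z₁ - z₂‖ * ((‖ζ - z₁‖ ^ 2)⁻¹ + (‖ζ - z₂‖ ^ 2)⁻¹) ∂ρ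
      = ‖z₁ - z₂‖ * ((∫ ζ, (‖ζ - z₁‖ ^ 2)⁻¹ ∂ρ) + ∫ ζ, (‖ζ - z₂‖ ^ 2)⁻¹ ∂ρ) := by
    rw [MeasureTheory.integral_const_mul,
      integral_add (myIntG ρ hρae z₁ hz1) (myIntG ρ hρae z₂ hz2)]
  have hg1 := myGBound ρ hρae α t ht z₁ h₁
  have hg2 := myGBound ρ hρae α t ht z₂ h₂
  calc ‖∫ ζ, ((ζ + z₁) / (ζ - z₁) - (ζ + z₂) / (ζ - z₂)) ∂ρ‖
      ≤ ‖z₁ - z₂‖ * ((∫ ζ, (‖ζ - z₁‖ ^ 2)⁻¹ ∂ρ) + ∫ ζ, (‖ζ - z₂‖ ^ 2)⁻¹ ∂ρ) := heq ▸ hb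
    _ ≤ ‖z₁ - z₂‖ * (M + M) := by
        apply mul_le_mul_of_nonneg_left _ (norm_nonneg _)
        exact add_le_add hg1 hg2
    _ = (2 * M) * ‖z₁ - z₂‖ := by ring


theorem stmt19 (ρ : Measure ℂ) [IsFiniteMeasure ρ]
    (hρ : ρ {z : ℂ | ‖z‖ = 1}ᶜ = 0)
    (α t : ℝ) (ht : 1 < t) :
    ∃ L : ℝ, 0 ≤ L ∧
      (∀ z₁ ∈ OmegaTset ρ α t, ∀ z₂ ∈ OmegaTset ρ α t,
        ‖uT ρ α z₁ - uT ρ α z₂‖ ≤ L * ‖z₁ - z₂‖) ∧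
      ∃ v : ℂ → ℂ, ContinuousOn v (closure (OmegaTset ρ α t)) ∧
        ∀ z ∈ OmegaTset ρ α t, v z = uT ρ α z := by
  have hρae := myAeNormOne ρ hρ
  have ht0 : (0:ℝ) < t - 1 := by linarith
  set L : ℝ := 2 * (2 / (t - 1) + 4 * (ρ Set.univ).toReal) with hL
  have hL0 : 0 ≤ L := by positivity
  refine ⟨L, hL0, ?_, ?_⟩
  · intro z₁ h₁ z₂ h₂
    have := myLip ρ hρae α t ht z₁ h₁ z₂ h₂
    exact this
  · set Ω := OmegaTset ρ α t
    have lipre : LipschitzOnWith (Real.toNNReal L) (fun z => (uT ρ α z).re) Ω := by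
      rw [lipschitzOnWith_iff_dist_le_mul]
      intro x hx y hy
      rw [Real.dist_eq, dist_eq_norm, Real.coe_toNNReal _ hL0]
      calc |(uT ρ α x).re - (uT ρ α y).re| = |(uT ρ α x - uT ρ α y).re| := by
            rw [Complex.sub_re]
        _ ≤ ‖uT ρ α x - uT ρ α y‖ := by
            exact Complex.abs_re_le_norm _
        _ ≤ L * ‖x - y‖ := myLip ρ hρae α t ht x hx y hy
    have lipim : LipschitzOnWith (Real.toNNReal L) (fun z => (uT ρ α z).im) Ω := by
      rw [lipschitzOnWith_iff_dist_le_mul]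
      intro x hx y hy
      rw [Real.dist_eq, dist_eq_norm, Real.coe_toNNReal _ hL0]
      calc |(uT ρ α x).im - (uT ρ α y).im| = |(uT ρ α x - uT ρ α y).im| := by
            rw [Complex.sub_im]
        _ ≤ ‖uT ρ α x - uT ρ α y‖ := by
            exact Complex.abs_im_le_norm _
        _ ≤ L * ‖x - y‖ := myLip ρ hρae α t ht x hx y hy
    obtain ⟨gre, hgre, heqre⟩ := lipre.extend_real
    obtain ⟨gim, hgim, heqim⟩ := lipim.extend_real
    refine ⟨fun z => (gre z : ℂ) + (gim z : ℂ) * Complex.I, ?_, ?_⟩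
    · apply Continuous.continuousOn
      exact (Complex.continuous_ofReal.comp hgre.continuous).add
        ((Complex.continuous_ofReal.comp hgim.continuous).mul continuous_const)
    · intro z hz
      show (gre z : ℂ) + (gim z : ℂ) * Complex.I = uT ρ α z
      rw [← heqre hz, ← heqim hz]
      exact Complex.re_add_im (uT ρ α z)
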